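/- arXiv:1801.08649 — 3 statements merged into one kernel-verified Lean document; each statement's English description precedes it below -/
import Mathlib

section
/- Let G = (V, E) be a finite simple graph and let (\{C_i\}_{i=1}^s, \{H_i\}_{i=1}^s) be a CH-partitioning of G. Then the clique number of G equals max_{1 ≤ i ≤ s} k_i, where k_i is the clique number of the subgraph of G induced by C_i ∪ H_i. -/
/-- For a CH-partitioning `({C i}, {H i})` of a finite simple graph `G`
(nonempty, pairwise-disjoint cores covering `V`; halo `H i` = neighbors of `C i` outside `C i`),
the clique number of `G` equals the maximum over `i` of the clique number of the subgraph
induced by `C i ∪ H i`. -/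
theorem ch_partitioning_clique_num {V : Type*} [Fintype V] (G : SimpleGraph V)
    (s : ℕ) (hs : 0 < s) (C H : Fin s → Set V)
    (hC_nonempty : ∀ i, (C i).Nonempty)
    (hC_cover : ⋃ i, C i = Set.univ)
    (hC_disjoint : ∀ i j, i ≠ j → C i ∩ C j = ∅)
    (hH : ∀ i, H i = {w | w ∉ C i ∧ ∃ u ∈ C i, G.Adj u w}) :
    G.cliqueNum = Finset.univ.sup (fun i : Fin s => (G.induce (C i ∪ H i)).cliqueNum) := by
  classical
  haveI : ∀ i : Fin s, Fintype ↥(C i ∪ H i) := fun i => Fintype.ofFinite _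
  apply le_antisymm
  · -- main clique fits in some C i ∪ H i
    obtain ⟨t, ht⟩ := G.exists_isNClique_cliqueNum
    rcases t.eq_empty_or_nonempty with rfl | ⟨v, hv⟩
    · have : G.cliqueNum = 0 := by simpa using ht.card_eq.symm
      simp [this]
    · have hvC : ∃ i, v ∈ C i := by
        have : v ∈ ⋃ i, C i := hC_cover ▸ Set.mem_univ v
        simpa using this
      obtain ⟨i, hvi⟩ := hvC
      have hsub : ∀ w ∈ t, w ∈ C i ∪ H i := by
        intro w hw
        by_cases hwC : w ∈ C i
        · exact Or.inl hwC
        · rcases eq_or_ne w v with rfl | hne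
          · exact absurd hvi hwC
          · refine Or.inr ?_
            rw [hH i]
            exact ⟨hwC, v, hvi, ht.isClique hv hw hne.symm⟩
      set f : {x // x ∈ t} ↪ ↥(C i ∪ H i) :=
        ⟨fun x => ⟨x.1, hsub x.1 x.2⟩, fun a b hab => by cases a; cases b; simpa using hab⟩
      have hclique : (G.induce (C i ∪ H i)).IsClique (t.attach.map f) := by
        intro a ha b hb hab
        obtain ⟨x, -, rfl⟩ := Finset.mem_map.mp ha
        obtain ⟨y, -, rfl⟩ := Finset.mem_map.mp hb
        have hxy : (x : V) ≠ (y : V) := by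
          intro h; apply hab; exact congrArg f (Subtype.ext h)
        exact ht.isClique x.2 y.2 hxy
      have hcard : (t.attach.map f).card = G.cliqueNum := by
        rw [Finset.card_map, Finset.card_attach, ht.card_eq]
      calc G.cliqueNum = (t.attach.map f).card := hcard.symm
        _ ≤ (G.induce (C i ∪ H i)).cliqueNum := hclique.card_le_cliqueNum
        _ ≤ _ := Finset.le_sup (f := fun j : Fin s => (G.induce (C j ∪ H j)).cliqueNum) (Finset.mem_univ i)
  · apply Finset.sup_le
    intro i _
    obtain ⟨t, ht⟩ := (G.induce (C i ∪ H i)).exists_isNClique_cliqueNum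
    have hclique : G.IsClique (t.map ⟨Subtype.val, Subtype.val_injective⟩) := by
      intro a ha b hb hab
      obtain ⟨x, hx, rfl⟩ := Finset.mem_map.mp ha
      obtain ⟨y, hy, rfl⟩ := Finset.mem_map.mp hb
      exact ht.isClique hx hy (fun h => hab (congrArg Subtype.val h))
    calc (G.induce (C i ∪ H i)).cliqueNum = (t.map ⟨Subtype.val, Subtype.val_injective⟩).card := by
          rw [Finset.card_map, ht.card_eq]
      _ ≤ G.cliqueNum := hclique.card_le_cliqueNum
end

section
/- Let G = (V, E) be a finite simple graph with at least one vertex, and for x : V → {0, 1} define H(x) = −∑_{v ∈ V} x_v + 2 ∑_{{u,v}} x_u x_v, where the second sum is over all unordered pairs {u, v} of distinct vertices that are NOT adjacent in G. Then the minimum of H(x) over all x : V → {0, 1} equals −ω(G), where ω(G) is the clique number of G. -/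
open Finset

private lemma key_lb {V : Type*} [Fintype V] [DecidableEq V]
    (G : SimpleGraph V) [DecidableRel G.Adj] :
    ∀ n (S : Finset V), S.card = n →
      -(G.cliqueNum : ℤ) ≤ -(S.card : ℤ) +
        2 * ((Gᶜ.edgeFinset.filter (fun e => ∀ v ∈ e, v ∈ S)).card : ℤ) := by
  intro n
  induction n using Nat.strong_induction_on with
  | _ n ih =>
    intro S hS
    by_cases hc : G.IsClique S
    · have h1 : (Gᶜ.edgeFinset.filter (fun e => ∀ v ∈ e, v ∈ S)) = ∅ := by
        rw [Finset.filter_eq_empty_iff]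
        intro e he
        rw [SimpleGraph.mem_edgeFinset] at he
        induction e with
        | h u w =>
          intro hmem
          rw [SimpleGraph.mem_edgeSet, SimpleGraph.compl_adj] at he
          exact he.2 (hc (hmem u (by simp)) (hmem w (by simp)) he.1)
      rw [h1]
      simp only [Finset.card_empty, Nat.cast_zero, mul_zero, add_zero, neg_le_neg_iff]
      exact_mod_cast hc.card_le_cliqueNum
    · rw [SimpleGraph.isClique_iff, Set.Pairwise] at hc
      push_neg at hc
      obtain ⟨u, hu, w, hw, hne, hnadj⟩ := hc
      set S' := S.erase u with hS'
      have hcard : S'.card + 1 = S.card := Finset.card_erase_add_one hu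
      have hsub : (Gᶜ.edgeFinset.filter (fun e => ∀ v ∈ e, v ∈ S')).card + 1 ≤
          (Gᶜ.edgeFinset.filter (fun e => ∀ v ∈ e, v ∈ S)).card := by
        have hmem : s(u, w) ∈ Gᶜ.edgeFinset.filter (fun e => ∀ v ∈ e, v ∈ S) := by
          rw [Finset.mem_filter, SimpleGraph.mem_edgeFinset]
          refine ⟨?_, ?_⟩
          · rw [SimpleGraph.mem_edgeSet, SimpleGraph.compl_adj]
            exact ⟨hne, hnadj⟩
          · intro v hv
            rw [Sym2.mem_iff] at hv
            rcases hv with rfl | rfl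
            · exact hu
            · exact hw
        have hnotmem : s(u, w) ∉ Gᶜ.edgeFinset.filter (fun e => ∀ v ∈ e, v ∈ S') := by
          rw [Finset.mem_filter]
          rintro ⟨-, h⟩
          have := h u (by simp)
          simp [hS'] at this
        have hsubset : Gᶜ.edgeFinset.filter (fun e => ∀ v ∈ e, v ∈ S') ⊆
            (Gᶜ.edgeFinset.filter (fun e => ∀ v ∈ e, v ∈ S)).erase s(u, w) := by
          intro e he
          rw [Finset.mem_erase]
          rw [Finset.mem_filter] at he ⊢
          refine ⟨fun h => hnotmem (h ▸ (Finset.mem_filter.mpr he)), he.1,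
            fun v hv => Finset.mem_of_mem_erase (he.2 v hv)⟩
        calc (Gᶜ.edgeFinset.filter (fun e => ∀ v ∈ e, v ∈ S')).card + 1
            ≤ ((Gᶜ.edgeFinset.filter (fun e => ∀ v ∈ e, v ∈ S)).erase s(u, w)).card + 1 :=
              by exact Nat.add_le_add_right (Finset.card_le_card hsubset) 1
          _ = (Gᶜ.edgeFinset.filter (fun e => ∀ v ∈ e, v ∈ S)).card :=
              Finset.card_erase_add_one hmem
      have hlt : S'.card < n := by omega
      have := ih S'.card hlt S' rfl
      have h2 : -(S'.card : ℤ) + 2 * ((Gᶜ.edgeFinset.filter (fun e => ∀ v ∈ e, v ∈ S')).card : ℤ)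
          ≤ -(S.card : ℤ) + 2 * ((Gᶜ.edgeFinset.filter (fun e => ∀ v ∈ e, v ∈ S)).card : ℤ) := by
        have c1 : (S'.card : ℤ) + 1 = (S.card : ℤ) := by exact_mod_cast hcard
        have c2 : ((Gᶜ.edgeFinset.filter (fun e => ∀ v ∈ e, v ∈ S')).card : ℤ) + 1 ≤
            ((Gᶜ.edgeFinset.filter (fun e => ∀ v ∈ e, v ∈ S)).card : ℤ) := by exact_mod_cast hsub
        linarith
      linarith

/-- For a finite simple graph `G` with at least one vertex and
`H(x) = -∑ v, x v + 2 * ∑_{ {u,v} non-adjacent, u ≠ v } x u * x v` (second sum over the edges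
of the complement graph `Gᶜ`), the minimum of `H` over all `x : V → {0,1}` is `-ω(G)`. -/
theorem qubo_min_eq_neg_clique_num {V : Type*} [Fintype V] [DecidableEq V] [Nonempty V]
    (G : SimpleGraph V) [DecidableRel G.Adj] :
    IsLeast
      {z : ℤ | ∃ x : V → ℤ, (∀ v, x v = 0 ∨ x v = 1) ∧
        z = -(∑ v, x v) +
          2 * ∑ e ∈ Gᶜ.edgeFinset, Sym2.lift ⟨fun u w => x u * x w, fun u w => mul_comm _ _⟩ e}
      (-(G.cliqueNum : ℤ)) := by
  constructor
  · -- membership: indicator of a max clique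
    obtain ⟨s, hs⟩ := G.exists_isNClique_cliqueNum
    refine ⟨fun v => if v ∈ s then 1 else 0, fun v => by by_cases h : v ∈ s <;> simp [h], ?_⟩
    have h1 : ∑ v, (if v ∈ s then (1:ℤ) else 0) = s.card := by
      rw [Finset.sum_ite_mem, Finset.univ_inter, Finset.sum_const, nsmul_eq_mul, mul_one]
    have h2 : ∑ e ∈ Gᶜ.edgeFinset, Sym2.lift ⟨fun u w =>
        (if u ∈ s then (1:ℤ) else 0) * (if w ∈ s then (1:ℤ) else 0),
        fun u w => mul_comm _ _⟩ e = 0 := by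
      apply Finset.sum_eq_zero
      intro e he
      rw [SimpleGraph.mem_edgeFinset] at he
      induction e with
      | h u w =>
        simp only [Sym2.lift_mk]
        rw [SimpleGraph.mem_edgeSet, SimpleGraph.compl_adj] at he
        by_cases hu : u ∈ s
        · by_cases hw : w ∈ s
          · exact absurd (hs.isClique hu hw he.1) he.2
          · simp [hw]
        · simp [hu]
    rw [h1, h2, mul_zero, add_zero, hs.card_eq]
  · -- lower bound
    rintro z ⟨x, hx, rfl⟩
    set S : Finset V := Finset.univ.filter (fun v => x v = 1) with hSdef
    have h1 : ∑ v, x v = (S.card : ℤ) := by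
      rw [Finset.card_filter]
      push_cast
      apply Finset.sum_congr rfl
      intro v _
      rcases hx v with h | h <;> simp [h, hSdef]
    have h2 : ∑ e ∈ Gᶜ.edgeFinset, Sym2.lift ⟨fun u w => x u * x w,
        fun u w => mul_comm _ _⟩ e =
        ((Gᶜ.edgeFinset.filter (fun e => ∀ v ∈ e, v ∈ S)).card : ℤ) := by
      rw [Finset.card_filter]
      push_cast
      apply Finset.sum_congr rfl
      intro e he
      induction e with
      | h u w =>
        simp only [Sym2.lift_mk]
        have hmem : (∀ v ∈ s(u, w), v ∈ S) ↔ (u ∈ S ∧ w ∈ S) := by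
          constructor
          · intro h; exact ⟨h u (by simp), h w (by simp)⟩
          · rintro ⟨h1, h2⟩ v hv
            rw [Sym2.mem_iff] at hv
            rcases hv with rfl | rfl <;> assumption
        have hSmem : ∀ v, v ∈ S ↔ x v = 1 := by intro v; simp [hSdef]
        rcases hx u with h | h <;> rcases hx w with h' | h' <;>
          simp [h, h', hmem, hSmem]
    rw [h1, h2]
    exact key_lb G S.card S rfl
end

section
/- Let G = (V, E) be a finite simple graph with at least one vertex, and for x : V → {0, 1} define H(x) = −∑_{v ∈ V} x_v + 2 ∑_{{u,v}} x_u x_v, where the second sum is over all unordered pairs {u, v} of distinct vertices that are NOT adjacent in G. Then x minimizes H over all functions V → {0, 1} if and only if the support {v ∈ V : x_v = 1} of x is a maximum clique of G. -/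
open Finset

section QUBO

variable {V : Type*} [Fintype V] [DecidableEq V]

private def qF (G : SimpleGraph V) [DecidableRel G.Adj] (x : V → ℤ) : ℤ :=
  -(∑ v, x v) +
    2 * ∑ e ∈ Gᶜ.edgeFinset, Sym2.lift ⟨fun u w => x u * x w, fun u w => mul_comm _ _⟩ e

private def supp (x : V → ℤ) : Finset V := univ.filter (fun v => x v = 1)

private lemma sum_eq_card (x : V → ℤ) (hx : ∀ v, x v = 0 ∨ x v = 1) :
    ∑ v, x v = (supp x).card := by
  rw [supp, card_filter]
  push_cast
  refine Finset.sum_congr rfl (fun v _ => ?_)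
  rcases hx v with h | h <;> simp [h]

private lemma term_nonneg (x : V → ℤ) (hx : ∀ v, x v = 0 ∨ x v = 1) (e : Sym2 V) :
    0 ≤ Sym2.lift ⟨fun u w => x u * x w, fun u w => mul_comm _ _⟩ e := by
  induction e using Sym2.ind with
  | _ u w =>
    simp only [Sym2.lift_mk]
    rcases hx u with h | h <;> rcases hx w with h' | h' <;> simp [h, h']

private lemma edgeSum_eq_zero (G : SimpleGraph V) [DecidableRel G.Adj] (x : V → ℤ)
    (hx : ∀ v, x v = 0 ∨ x v = 1) (hc : G.IsClique {v | x v = 1}) :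
    ∑ e ∈ Gᶜ.edgeFinset, Sym2.lift ⟨fun u w => x u * x w, fun u w => mul_comm _ _⟩ e = 0 := by
  refine Finset.sum_eq_zero fun e he => ?_
  induction e using Sym2.ind with
  | _ u w =>
    rw [SimpleGraph.mem_edgeFinset, SimpleGraph.mem_edgeSet, SimpleGraph.compl_adj] at he
    simp only [Sym2.lift_mk]
    rcases hx u with h | h
    · simp [h]
    rcases hx w with h' | h'
    · simp [h']
    exact absurd (hc h h' he.1) he.2

private lemma qF_clique (G : SimpleGraph V) [DecidableRel G.Adj] (x : V → ℤ)
    (hx : ∀ v, x v = 0 ∨ x v = 1) (hc : G.IsClique {v | x v = 1}) :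
    qF G x = -((supp x).card : ℤ) := by
  rw [qF, edgeSum_eq_zero G x hx hc, sum_eq_card x hx]
  ring

private lemma update_mem01 (x : V → ℤ) (hx : ∀ v, x v = 0 ∨ x v = 1) (u : V) :
    ∀ v, Function.update x u 0 v = 0 ∨ Function.update x u 0 v = 1 := by
  intro v
  rcases eq_or_ne v u with rfl | h
  · simp
  · simpa [Function.update_of_ne h] using hx v

private lemma supp_update (x : V → ℤ) (u : V) :
    supp (Function.update x u 0) = (supp x).erase u := by
  ext v
  rcases eq_or_ne v u with rfl | h
  · simp [supp]
  · simp [supp, Function.update_of_ne h, h]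

private lemma qF_update_le (G : SimpleGraph V) [DecidableRel G.Adj] (x : V → ℤ)
    (hx : ∀ v, x v = 0 ∨ x v = 1) {u w : V} (hxu : x u = 1) (hxw : x w = 1)
    (hne : u ≠ w) (hadj : ¬ G.Adj u w) :
    qF G (Function.update x u 0) + 1 ≤ qF G x := by
  set y := Function.update x u 0 with hy
  have hsum : ∑ v, y v = (∑ v, x v) - 1 := by
    have h1 : ∑ v, y v = ∑ v ∈ univ.erase u, x v := by
      rw [← Finset.add_sum_erase _ y (mem_univ u)]
      have : ∀ v ∈ univ.erase u, y v = x v := fun v hv =>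
        Function.update_of_ne (Finset.ne_of_mem_erase hv) _ _
      rw [Finset.sum_congr rfl this]
      simp [hy]
    have h2 : ∑ v, x v = x u + ∑ v ∈ univ.erase u, x v :=
      (Finset.add_sum_erase _ x (mem_univ u)).symm
    rw [h1, h2, hxu]; ring
  -- the edge s(u,w) is in the complement
  have he0 : s(u, w) ∈ Gᶜ.edgeFinset := by
    rw [SimpleGraph.mem_edgeFinset, SimpleGraph.mem_edgeSet, SimpleGraph.compl_adj]
    exact ⟨hne, hadj⟩
  have hedge : ∑ e ∈ Gᶜ.edgeFinset, Sym2.lift ⟨fun a b => y a * y b, fun a b => mul_comm _ _⟩ e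
      + 1 ≤ ∑ e ∈ Gᶜ.edgeFinset, Sym2.lift ⟨fun a b => x a * x b, fun a b => mul_comm _ _⟩ e := by
    rw [← Finset.add_sum_erase _ _ he0, ← Finset.add_sum_erase _ _ he0]
    have hy0 : Sym2.lift ⟨fun a b => y a * y b, fun a b => mul_comm _ _⟩ s(u, w) = 0 := by
      simp [hy]
    have hx1 : Sym2.lift ⟨fun a b => x a * x b, fun a b => mul_comm _ _⟩ s(u, w) = 1 := by
      simp [hxu, hxw]
    rw [hy0, hx1]
    have hrest : ∑ e ∈ (Gᶜ.edgeFinset).erase s(u, w),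
        Sym2.lift ⟨fun a b => y a * y b, fun a b => mul_comm _ _⟩ e ≤
        ∑ e ∈ (Gᶜ.edgeFinset).erase s(u, w),
        Sym2.lift ⟨fun a b => x a * x b, fun a b => mul_comm _ _⟩ e := by
      refine Finset.sum_le_sum fun e he => ?_
      induction e using Sym2.ind with
      | _ a b =>
        simp only [Sym2.lift_mk]
        rcases eq_or_ne a u with rfl | ha
        · have : y a = 0 := by simp [hy]
          rw [this, zero_mul]
          rcases hx a with h | h <;> rcases hx b with h' | h' <;> simp [h, h']
        rcases eq_or_ne b u with rfl | hb
        · have : y b = 0 := by simp [hy]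
          rw [this, mul_zero]
          rcases hx a with h | h <;> rcases hx b with h' | h' <;> simp [h, h']
        · rw [hy]
          rw [Function.update_of_ne ha, Function.update_of_ne hb]
    linarith
  rw [qF, qF, hsum]
  linarith

private lemma qF_lower (G : SimpleGraph V) [DecidableRel G.Adj] (S : Finset V)
    (hmax : ∀ T : Set V, G.IsClique T → T.ncard ≤ (S : Set V).ncard) :
    ∀ (n : ℕ) (y : V → ℤ), (∀ v, y v = 0 ∨ y v = 1) → (supp y).card = n →
      -(S.card : ℤ) ≤ qF G y := by
  intro n
  induction n using Nat.strong_induction_on with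
  | _ n ih =>
    intro y hy hcard
    by_cases hc : G.IsClique {v | y v = 1}
    · rw [qF_clique G y hy hc]
      have h1 : ({v | y v = 1} : Set V).ncard = (supp y).card := by
        have : ({v | y v = 1} : Set V) = ↑(supp y) := by
          ext v; simp [supp]
        rw [this, Set.ncard_coe_finset]
      have := hmax {v | y v = 1} hc
      rw [h1, Set.ncard_coe_finset] at this
      exact_mod_cast neg_le_neg (by exact_mod_cast this)
    · rw [SimpleGraph.IsClique, Set.Pairwise] at hc
      push_neg at hc
      obtain ⟨a, ha, b, hb, hab, hnadj⟩ := hc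
      have hya : y a = 1 := ha
      have hyb : y b = 1 := hb
      have hstep := qF_update_le G y hy hya hyb hab hnadj
      have hmem : a ∈ supp y := by simp [supp, hya]
      have hcard' : (supp (Function.update y a 0)).card = n - 1 := by
        rw [supp_update, Finset.card_erase_of_mem hmem, hcard]
      have hn : 0 < n := by
        rw [← hcard]; exact Finset.card_pos.mpr ⟨a, hmem⟩
      have hih := ih (n - 1) (Nat.sub_lt hn one_pos) (Function.update y a 0)
        (update_mem01 y hy a) hcard'
      linarith

end QUBO

/-- For a finite simple graph `G` with at least one vertex and
`H(x) = -∑ v, x v + 2 * ∑_{ {u,v} non-adjacent, u ≠ v } x u * x v` (second sum over the edges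
of the complement graph `Gᶜ`), a function `x : V → {0,1}` minimizes `H` iff its support
`{v | x v = 1}` is a maximum clique of `G`. -/
theorem qubo_minimizer_iff_maximum_clique {V : Type*} [Fintype V] [DecidableEq V] [Nonempty V]
    (G : SimpleGraph V) [DecidableRel G.Adj] (x : V → ℤ) (hx : ∀ v, x v = 0 ∨ x v = 1) :
    (∀ y : V → ℤ, (∀ v, y v = 0 ∨ y v = 1) →
      -(∑ v, x v) +
          2 * ∑ e ∈ Gᶜ.edgeFinset, Sym2.lift ⟨fun u w => x u * x w, fun u w => mul_comm _ _⟩ e ≤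
        -(∑ v, y v) +
          2 * ∑ e ∈ Gᶜ.edgeFinset, Sym2.lift ⟨fun u w => y u * y w, fun u w => mul_comm _ _⟩ e) ↔
    (G.IsClique {v | x v = 1} ∧
      ∀ S : Set V, G.IsClique S → S.ncard ≤ {v | x v = 1}.ncard) := by
  have hsuppx : ({v | x v = 1} : Set V) = ↑(supp x) := by ext v; simp [supp]
  constructor
  · intro h
    have hq : ∀ y : V → ℤ, (∀ v, y v = 0 ∨ y v = 1) → qF G x ≤ qF G y := h
    have hclique : G.IsClique {v | x v = 1} := by
      by_contra hc
      rw [SimpleGraph.IsClique, Set.Pairwise] at hc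
      push_neg at hc
      obtain ⟨a, ha, b, hb, hab, hnadj⟩ := hc
      have hstep := qF_update_le G x hx (ha : x a = 1) (hb : x b = 1) hab hnadj
      have := hq (Function.update x a 0) (update_mem01 x hx a)
      linarith
    refine ⟨hclique, fun S hS => ?_⟩
    classical
    set y : V → ℤ := fun v => if v ∈ S then 1 else 0 with hydef
    have hy01 : ∀ v, y v = 0 ∨ y v = 1 := by
      intro v; by_cases hv : v ∈ S <;> simp [hydef, hv]
    have hsuppy : ({v | y v = 1} : Set V) = S := by
      ext v; by_cases hv : v ∈ S <;> simp [hydef, hv]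
    have hycl : G.IsClique {v | y v = 1} := hsuppy ▸ hS
    have h1 := hq y hy01
    rw [qF_clique G x hx hclique, qF_clique G y hy01 hycl] at h1
    have hSy : S.ncard = (supp y).card := by
      rw [← hsuppy]
      have : ({v | y v = 1} : Set V) = ↑(supp y) := by ext v; simp [supp]
      rw [this, Set.ncard_coe_finset]
    rw [hsuppx, Set.ncard_coe_finset, hSy]
    exact_mod_cast neg_le_neg_iff.mp h1
  · rintro ⟨hclique, hmax⟩ y hy
    have hx' : qF G x = -((supp x).card : ℤ) := qF_clique G x hx hclique
    have hmax' : ∀ T : Set V, G.IsClique T → T.ncard ≤ ((supp x : Finset V) : Set V).ncard := by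
      intro T hT
      rw [Set.ncard_coe_finset, ← Set.ncard_coe_finset, ← hsuppx]
      exact hmax T hT
    have := qF_lower G (supp x) hmax' (supp y).card y hy rfl
    show qF G x ≤ qF G y
    rw [hx']
    exact this
end
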